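/- There exist invertible real d×d matrices H such that H·S_mono·H^T = S_axis, where S_axis is the upper-triangular matrix with diagonal entries 1/2 and entries 1 above the diagonal, and S_mono is the matrix with entries j/(i+j). Consequently, the set of matrices {X·S_axis·X^T : X ∈ ℝ^{d×d}} equals the set {X·S_mono·X^T : X ∈ ℝ^{d×d}}. -/

import Mathlib

open Finset Nat Polynomial

open scoped BigOperators
open Matrix

/-- The second signature matrix of the canonical axis path: upper triangular with
diagonal entries `1/2` and entries `1` above the diagonal. -/
noncomputable def Saxis (d : ℕ) : Matrix (Fin d) (Fin d) ℝ :=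
  Matrix.of fun i j => if i = j then (1 : ℝ) / 2 else if i < j then 1 else 0

/-- The second signature matrix of the canonical monomial path: (1-based) entries
`j/(i+j)`. -/
noncomputable def Smono (d : ℕ) : Matrix (Fin d) (Fin d) ℝ :=
  Matrix.of fun i j => ((j : ℕ) + 1 : ℝ) / ((i : ℕ) + (j : ℕ) + 2 : ℝ)


-- L2': ∏_{k ∈ Icc (A+1) I} (k - A) = (I-A)!  (ℕ)
lemma L2 (A I : ℕ) (h : A ≤ I) : ∏ k ∈ Icc (A+1) I, (k - A) = (I - A)! := by
  induction I with
  | zero => interval_cases A; simp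
  | succ n ih =>
    rcases Nat.eq_or_lt_of_le h with rfl | h'
    · simp
    · have hA : A ≤ n := Nat.lt_succ_iff.mp h'
      rw [Finset.prod_Icc_succ_top (by omega), ih hA]
      have : n + 1 - A = (n - A) + 1 := by omega
      rw [this, Nat.factorial_succ, mul_comm]

-- reflection: ∏_{k ∈ Icc 1 n} (n+1-k) = n!
lemma L1 (n : ℕ) : ∏ k ∈ Icc 1 n, (n + 1 - k) = n ! := by
  rw [← Finset.prod_Ico_id_eq_factorial, ← Finset.Ico_add_one_right_eq_Icc]
  apply Finset.prod_nbij' (fun k => n + 1 - k) (fun k => n + 1 - k) <;>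
    intros <;> simp_all [Finset.mem_Icc] <;> omega

-- L3': ∏_{k ∈ Icc 1 n} (A + k) * A! = (A+n)!
lemma L3 (A n : ℕ) : (∏ k ∈ Icc 1 n, (A + k)) * A ! = (A + n)! := by
  induction n with
  | zero => simp
  | succ n ih =>
    rw [Finset.prod_Icc_succ_top (by omega), ← add_assoc, Nat.factorial_succ, mul_comm (∏ k ∈ Icc 1 n, (A+k)) _, mul_assoc, ih, mul_comm]

-- factorial identity
lemma Lfac (A I : ℕ) (h1 : 1 ≤ A) (h2 : A ≤ I) :
    I.choose A * ((I + A - 1).choose (A - 1)) * ((A-1)! * (I-A)!) * A ! = (I + A - 1)! := by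
  have c1 : I.choose A * A ! * (I - A)! = I ! := Nat.choose_mul_factorial_mul_factorial h2
  have hAI : A - 1 ≤ I + A - 1 := by omega
  have c2 : (I + A - 1).choose (A-1) * (A-1)! * (I + A - 1 - (A-1))! = (I + A - 1)! :=
    Nat.choose_mul_factorial_mul_factorial hAI
  have : I + A - 1 - (A - 1) = I := by omega
  rw [this] at c2
  calc I.choose A * ((I + A - 1).choose (A - 1)) * ((A-1)! * (I-A)!) * A !
      = ((I + A - 1).choose (A-1) * (A-1)!) * (I.choose A * A ! * (I-A)!) := by ring
    _ = ((I + A - 1).choose (A-1) * (A-1)!) * I ! := by rw [c1]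
    _ = (I + A - 1)! := by rw [← c2]

noncomputable def coef (I A : ℕ) : ℝ :=
  (-1 : ℝ)^(I - A) * (I.choose A) * ((I + A - 1).choose (A - 1))

lemma erase_split (A I : ℕ) (h1 : 1 ≤ A) (h2 : A ≤ I) :
    (Icc 1 I).erase A = Icc 1 (A-1) ∪ Icc (A+1) I := by
  ext k
  simp [Finset.mem_erase, Finset.mem_Icc, Finset.mem_union]
  omega

lemma prod_low (A : ℕ) (h1 : 1 ≤ A) :
    ∏ k ∈ Icc 1 (A-1), ((k:ℝ) - A) = (-1:ℝ)^(A-1) * ((A-1)! : ℝ) := by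
  have : ∀ k ∈ Icc 1 (A-1), ((k:ℝ) - A) = (-1) * ((A - k : ℕ) : ℝ) := by
    intro k hk
    simp only [Finset.mem_Icc] at hk
    have : (A - k : ℕ) = A - k := rfl
    push_cast [Nat.cast_sub (by omega : k ≤ A)]
    ring
  rw [Finset.prod_congr rfl this, Finset.prod_mul_distrib]
  have hL1 : ∏ k ∈ Icc 1 (A-1), (A - k) = (A-1)! := by
    have := L1 (A-1)
    rw [← this]
    apply Finset.prod_congr rfl
    intro k hk; simp only [Finset.mem_Icc] at hk; omega
  rw [Finset.prod_const, Nat.card_Icc, ← Nat.cast_prod, hL1]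
  norm_num

lemma prod_high (A I : ℕ) (h2 : A ≤ I) :
    ∏ k ∈ Icc (A+1) I, ((k:ℝ) - A) = ((I - A)! : ℝ) := by
  have : ∀ k ∈ Icc (A+1) I, ((k:ℝ) - A) = ((k - A : ℕ) : ℝ) := by
    intro k hk
    simp only [Finset.mem_Icc] at hk
    push_cast [Nat.cast_sub (by omega : A ≤ k)]
    ring
  rw [Finset.prod_congr rfl this, ← Nat.cast_prod, L2 A I h2]

lemma prod_rhs (A I : ℕ) : ∏ k ∈ Icc 1 (I-1), (-(A:ℝ) - k)
    = (-1:ℝ)^(I-1) * (((A + (I-1))! : ℝ) / (A ! : ℝ)) := by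
  have : ∀ k ∈ Icc 1 (I-1), (-(A:ℝ) - k) = (-1) * ((A + k : ℕ) : ℝ) := by
    intro k _; push_cast; ring
  rw [Finset.prod_congr rfl this, Finset.prod_mul_distrib, Finset.prod_const, Nat.card_Icc,
    ← Nat.cast_prod]
  have hA : (A ! : ℝ) ≠ 0 := by positivity
  have h3 : ((∏ k ∈ Icc 1 (I-1), (A + k) : ℕ) : ℝ) = ((A + (I-1))! : ℝ) / (A ! : ℝ) := by
    rw [eq_div_iff hA, ← Nat.cast_mul, L3 A (I-1)]
  rw [h3]
  norm_num

lemma key_eval (A I : ℕ) (h1 : 1 ≤ A) (h2 : A ≤ I) :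
    coef I A * ∏ k ∈ (Icc 1 I).erase A, ((k:ℝ) - A) = ∏ k ∈ Icc 1 (I-1), (-(A:ℝ) - k) := by
  rw [erase_split A I h1 h2, Finset.prod_union (by
      simp only [Finset.disjoint_left, Finset.mem_Icc]; omega),
    prod_low A h1, prod_high A I h2, prod_rhs A I, coef]
  have hsign : (-1:ℝ)^(I-A) * (-1:ℝ)^(A-1) = (-1:ℝ)^(I-1) := by
    rw [← pow_add]; congr 1; omega
  have hfac := Lfac A I h1 h2
  have hA : (A ! : ℝ) ≠ 0 := by positivity
  have hIA : A + (I - 1) = I + A - 1 := by omega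
  rw [hIA]
  field_simp
  calc _
      = ((-1:ℝ)^(I-A) * (-1:ℝ)^(A-1)) * ((I.choose A * ((I + A - 1).choose (A - 1)) * ((A-1)! * (I-A)!) * A ! : ℕ) : ℝ) := by
        push_cast; ring
    _ = (-1:ℝ)^(I-1) * (((I + A - 1)! : ℕ) : ℝ) := by rw [hsign, hfac]

open Polynomial

noncomputable def Ppoly (I : ℕ) : Polynomial ℝ :=
  ∑ A ∈ Icc 1 I, Polynomial.C (coef I A) * ∏ k ∈ (Icc 1 I).erase A, (Polynomial.X + Polynomial.C (k:ℝ))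

noncomputable def Qpoly (I : ℕ) : Polynomial ℝ :=
  ∏ k ∈ Icc 1 (I-1), (Polynomial.X - Polynomial.C (k:ℝ))

lemma prod_erase_monic (I A : ℕ) :
    (∏ k ∈ (Icc 1 I).erase A, (Polynomial.X + Polynomial.C (k:ℝ))).Monic :=
  monic_prod_of_monic _ _ (fun k _ => monic_X_add_C _)

lemma prod_erase_natDegree (I A : ℕ) (hA : A ∈ Icc 1 I) :
    (∏ k ∈ (Icc 1 I).erase A, (Polynomial.X + Polynomial.C (k:ℝ))).natDegree = I - 1 := by
  rw [Polynomial.natDegree_prod_of_monic _ _ (fun k _ => monic_X_add_C _)]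
  simp only [natDegree_X_add_C, Finset.sum_const, smul_eq_mul, mul_one]
  rw [Finset.card_erase_of_mem hA, Nat.card_Icc]
  omega

lemma Qpoly_monic (I : ℕ) : (Qpoly I).Monic :=
  monic_prod_of_monic _ _ (fun k _ => monic_X_sub_C _)

lemma Qpoly_natDegree (I : ℕ) : (Qpoly I).natDegree = I - 1 := by
  rw [Qpoly, Polynomial.natDegree_prod_of_monic _ _ (fun k _ => monic_X_sub_C _)]
  have h : ∀ k ∈ Icc 1 (I-1), (Polynomial.X - Polynomial.C (k:ℝ)).natDegree = 1 :=
    fun k _ => Polynomial.natDegree_X_sub_C _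
  rw [Finset.sum_congr rfl h, Finset.sum_const, smul_eq_mul, mul_one, Nat.card_Icc]
  omega

lemma keyPoly (I : ℕ) (hI : 1 ≤ I) : Ppoly I = Qpoly I := by
  rw [← sub_eq_zero]
  apply Polynomial.eq_zero_of_natDegree_lt_card_of_eval_eq_zero'
    _ ((Icc 1 I).image (fun A : ℕ => -(A:ℝ)))
  · intro x hx
    simp only [Finset.mem_image] at hx
    obtain ⟨A, hA, rfl⟩ := hx
    simp only [Finset.mem_Icc] at hA
    rw [Polynomial.eval_sub, Ppoly, Qpoly, Polynomial.eval_finset_sum]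
    have hPA : ∀ A' ∈ Icc 1 I, A' ≠ A →
        Polynomial.eval (-(A:ℝ)) (Polynomial.C (coef I A') *
          ∏ k ∈ (Icc 1 I).erase A', (Polynomial.X + Polynomial.C (k:ℝ))) = 0 := by
      intro A' hA' hne
      rw [Polynomial.eval_mul, Polynomial.eval_prod]
      have : A ∈ (Icc 1 I).erase A' := by
        rw [Finset.mem_erase]
        exact ⟨fun h => hne h.symm, by simp [Finset.mem_Icc]; omega⟩
      rw [Finset.prod_eq_zero this (by simp), mul_zero]
    rw [Finset.sum_eq_single_of_mem A (by simp [Finset.mem_Icc]; omega) hPA]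
    rw [Polynomial.eval_mul, Polynomial.eval_prod, Polynomial.eval_C]
    have he : ∀ k ∈ (Icc 1 I).erase A,
        Polynomial.eval (-(A:ℝ)) (Polynomial.X + Polynomial.C (k:ℝ)) = (k:ℝ) - A := by
      intro k _; simp; ring
    rw [Finset.prod_congr rfl he, key_eval A I hA.1 hA.2, Polynomial.eval_prod]
    have he2 : ∀ k ∈ Icc 1 (I-1),
        Polynomial.eval (-(A:ℝ)) (Polynomial.X - Polynomial.C (k:ℝ)) = -(A:ℝ) - k := by
      intro k _; simp
    rw [Finset.prod_congr rfl he2, sub_self]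
  · have h1 : (Ppoly I).natDegree ≤ I - 1 := by
      apply Polynomial.natDegree_sum_le_of_forall_le
      intro A hA
      refine le_trans (Polynomial.natDegree_mul_le) ?_
      simp only [Polynomial.natDegree_C, prod_erase_natDegree I A hA, zero_add, le_refl]
    have h2 : (Qpoly I).natDegree ≤ I - 1 := le_of_eq (Qpoly_natDegree I)
    have hcard : ((Icc 1 I).image (fun A : ℕ => -(A:ℝ))).card = I := by
      rw [Finset.card_image_of_injective _ (fun a b h => by
        have : (a:ℝ) = b := by linarith [neg_injective h]
        exact_mod_cast this), Nat.card_Icc]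
      omega
    rw [hcard]
    calc (Ppoly I - Qpoly I).natDegree ≤ max (Ppoly I).natDegree (Qpoly I).natDegree :=
          Polynomial.natDegree_sub_le _ _
      _ ≤ I - 1 := by omega
      _ < I := by omega

lemma rowsum (I : ℕ) (hI : 1 ≤ I) : ∑ A ∈ Icc 1 I, coef I A = 1 := by
  have h := congrArg (fun p => Polynomial.coeff p (I-1)) (keyPoly I hI)
  simp only [Ppoly] at h
  rw [Polynomial.finset_sum_coeff] at h
  have hc : ∀ A ∈ Icc 1 I, Polynomial.coeff (Polynomial.C (coef I A) *
      ∏ k ∈ (Icc 1 I).erase A, (Polynomial.X + Polynomial.C (k:ℝ))) (I-1) = coef I A := by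
    intro A hA
    rw [Polynomial.coeff_C_mul, ← prod_erase_natDegree I A hA,
      (prod_erase_monic I A).coeff_natDegree, mul_one]
  rw [Finset.sum_congr rfl hc] at h
  rw [h, ← Qpoly_natDegree I, (Qpoly_monic I).coeff_natDegree]

lemma orth (I B : ℕ) (hB1 : 1 ≤ B) (hB2 : B ≤ I - 1) :
    ∑ A ∈ Icc 1 I, coef I A / ((A : ℝ) + B) = 0 := by
  have hI : 1 ≤ I := by omega
  have h := congrArg (Polynomial.eval (B : ℝ)) (keyPoly I hI)
  simp only [Ppoly, Qpoly, Polynomial.eval_finset_sum, Polynomial.eval_prod,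
    Polynomial.eval_mul, Polynomial.eval_C, Polynomial.eval_add, Polynomial.eval_sub,
    Polynomial.eval_X] at h
  rw [Finset.prod_eq_zero (Finset.mem_Icc.mpr ⟨hB1, hB2⟩) (by ring)] at h
  set Pfull : ℝ := ∏ k ∈ Icc 1 I, ((B:ℝ) + k) with hPfull
  have hpos : ∀ k ∈ Icc 1 I, (0:ℝ) < (B:ℝ) + k := by
    intro k hk; simp only [Finset.mem_Icc] at hk
    have : (1:ℝ) ≤ (k:ℝ) := by exact_mod_cast hk.1
    positivity
  have hPfullpos : 0 < Pfull := Finset.prod_pos hpos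
  have hterm : ∀ A ∈ Icc 1 I, coef I A / ((A:ℝ) + B)
      = (coef I A * ∏ k ∈ (Icc 1 I).erase A, ((B:ℝ) + k)) / Pfull := by
    intro A hA
    have hmul : ((B:ℝ) + A) * ∏ k ∈ (Icc 1 I).erase A, ((B:ℝ) + k) = Pfull :=
      Finset.mul_prod_erase (Icc 1 I) (fun k => (B:ℝ) + k) hA
    have hBA : (0:ℝ) < (B:ℝ) + A := hpos A hA
    rw [eq_div_iff (ne_of_gt hPfullpos), ← hmul]
    field_simp
    ring
  rw [Finset.sum_congr rfl hterm, ← Finset.sum_div, h, zero_div]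

lemma coef_zero (I A : ℕ) (h : I < A) : coef I A = 0 := by
  simp [coef, Nat.choose_eq_zero_of_lt h]

lemma fin_to_Icc (d I : ℕ) (hId : I ≤ d) (g : ℕ → ℝ) :
    ∑ a : Fin d, g (a + 1) = ∑ A ∈ Icc 1 I, g A + ∑ A ∈ Icc (I+1) d, g A := by
  rw [Fin.sum_univ_eq_sum_range (fun n => g (n+1)) d]
  have h1 : ∑ A ∈ Icc 1 d, g A = ∑ n ∈ Finset.range d, g (n + 1) := by
    rw [← Finset.Ico_add_one_right_eq_Icc, Finset.sum_Ico_eq_sum_range]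
    exact Finset.sum_congr (by norm_num) (fun n _ => by rw [add_comm])
  rw [← h1]
  rw [← Finset.sum_union (by simp only [Finset.disjoint_left, Finset.mem_Icc]; omega)]
  congr 1
  ext k
  simp only [Finset.mem_Icc, Finset.mem_union]
  omega

lemma rowsum_fin (d : ℕ) (i : Fin d) : ∑ a : Fin d, coef ((i:ℕ)+1) ((a:ℕ)+1) = 1 := by
  rw [fin_to_Icc d ((i:ℕ)+1) (by omega) (fun A => coef ((i:ℕ)+1) A)]
  rw [rowsum ((i:ℕ)+1) (by omega)]
  have : ∀ A ∈ Icc ((i:ℕ)+2) d, coef ((i:ℕ)+1) A = 0 := by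
    intro A hA; simp only [Finset.mem_Icc] at hA
    exact coef_zero _ _ (by omega)
  rw [Finset.sum_congr rfl this, Finset.sum_const_zero, add_zero]

lemma orth_fin (d : ℕ) (i b : Fin d) (hb : (b:ℕ) < (i:ℕ)) :
    ∑ a : Fin d, coef ((i:ℕ)+1) ((a:ℕ)+1) / (((a:ℕ):ℝ) + ((b:ℕ):ℝ) + 2) = 0 := by
  have hcast : ∀ A : ℕ, ((A:ℝ) + (((b:ℕ)+1 : ℕ)):ℝ) = (A:ℝ) + ((b:ℕ):ℝ) + 1 := by
    intro A; push_cast; ring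
  have key := orth ((i:ℕ)+1) ((b:ℕ)+1) (by omega) (by omega)
  have heq : ∀ a : Fin d, coef ((i:ℕ)+1) ((a:ℕ)+1) / (((a:ℕ):ℝ) + ((b:ℕ):ℝ) + 2)
      = (fun A => coef ((i:ℕ)+1) A / ((A:ℝ) + (((b:ℕ)+1 : ℕ) : ℝ))) ((a:ℕ)+1) := by
    intro a; simp only; congr 1; push_cast; ring
  rw [Finset.sum_congr rfl (fun a _ => heq a)]
  rw [fin_to_Icc d ((i:ℕ)+1) (by omega)
    (fun A => coef ((i:ℕ)+1) A / ((A:ℝ) + (((b:ℕ)+1 : ℕ) : ℝ)))]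
  rw [key]
  have : ∀ A ∈ Icc ((i:ℕ)+2) d,
      coef ((i:ℕ)+1) A / ((A:ℝ) + (((b:ℕ)+1 : ℕ) : ℝ)) = 0 := by
    intro A hA; simp only [Finset.mem_Icc] at hA
    rw [coef_zero _ _ (by omega), zero_div]
  rw [Finset.sum_congr rfl this, Finset.sum_const_zero, add_zero]

noncomputable def Hmat (d : ℕ) : Matrix (Fin d) (Fin d) ℝ :=
  Matrix.of fun i a => coef ((i:ℕ)+1) ((a:ℕ)+1)

lemma entry_formula (d : ℕ) (i j : Fin d) :
    (Hmat d * Smono d * (Hmat d)ᵀ) i j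
    = ∑ b : Fin d, (∑ a : Fin d, coef ((i:ℕ)+1) ((a:ℕ)+1) *
        (((((b:ℕ)):ℝ)+1) / (((a:ℕ):ℝ) + ((b:ℕ):ℝ) + 2))) * coef ((j:ℕ)+1) ((b:ℕ)+1) := by
  simp only [Matrix.mul_apply, Matrix.transpose_apply, Hmat, Smono, Matrix.of_apply]

lemma entry_lower (d : ℕ) (i j : Fin d) (h : (j:ℕ) < (i:ℕ)) :
    (Hmat d * Smono d * (Hmat d)ᵀ) i j = 0 := by
  rw [entry_formula]
  apply Finset.sum_eq_zero
  intro b _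
  by_cases hb : (b:ℕ) < (i:ℕ)
  · have hin : ∑ a : Fin d, coef ((i:ℕ)+1) ((a:ℕ)+1) *
        (((((b:ℕ)):ℝ)+1) / (((a:ℕ):ℝ) + ((b:ℕ):ℝ) + 2))
        = (((b:ℕ):ℝ)+1) * ∑ a : Fin d, coef ((i:ℕ)+1) ((a:ℕ)+1) / (((a:ℕ):ℝ) + ((b:ℕ):ℝ) + 2) := by
      rw [Finset.mul_sum]
      exact Finset.sum_congr rfl fun a _ => by ring
    rw [hin, orth_fin d i b hb, mul_zero, zero_mul]
  · rw [coef_zero ((j:ℕ)+1) ((b:ℕ)+1) (by omega), mul_zero]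

lemma entry_symm (d : ℕ) (i j : Fin d) :
    (Hmat d * Smono d * (Hmat d)ᵀ) i j + (Hmat d * Smono d * (Hmat d)ᵀ) j i = 1 := by
  rw [entry_formula, entry_formula]
  have e1 : ∀ (i' j' : Fin d), (∑ b : Fin d, (∑ a : Fin d, coef ((i':ℕ)+1) ((a:ℕ)+1) *
        (((((b:ℕ)):ℝ)+1) / (((a:ℕ):ℝ) + ((b:ℕ):ℝ) + 2))) * coef ((j':ℕ)+1) ((b:ℕ)+1))
      = ∑ b : Fin d, ∑ a : Fin d, coef ((i':ℕ)+1) ((a:ℕ)+1) *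
        (((((b:ℕ)):ℝ)+1) / (((a:ℕ):ℝ) + ((b:ℕ):ℝ) + 2)) * coef ((j':ℕ)+1) ((b:ℕ)+1) := by
    intro i' j'
    exact Finset.sum_congr rfl fun b _ => by rw [Finset.sum_mul]
  rw [e1 i j, e1 j i]
  rw [Finset.sum_comm (f := fun (b a : Fin d) => coef ((j:ℕ)+1) ((a:ℕ)+1) *
        (((((b:ℕ)):ℝ)+1) / (((a:ℕ):ℝ) + ((b:ℕ):ℝ) + 2)) * coef ((i:ℕ)+1) ((b:ℕ)+1))]
  rw [← Finset.sum_add_distrib]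
  have e2 : ∀ b : Fin d, (∑ a : Fin d, coef ((i:ℕ)+1) ((a:ℕ)+1) *
        (((((b:ℕ)):ℝ)+1) / (((a:ℕ):ℝ) + ((b:ℕ):ℝ) + 2)) * coef ((j:ℕ)+1) ((b:ℕ)+1))
      + (∑ a : Fin d, coef ((j:ℕ)+1) ((b:ℕ)+1) *
        (((((a:ℕ)):ℝ)+1) / (((b:ℕ):ℝ) + ((a:ℕ):ℝ) + 2)) * coef ((i:ℕ)+1) ((a:ℕ)+1))
      = ∑ a : Fin d, coef ((i:ℕ)+1) ((a:ℕ)+1) * coef ((j:ℕ)+1) ((b:ℕ)+1) := by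
    intro b
    rw [← Finset.sum_add_distrib]
    refine Finset.sum_congr rfl fun a _ => ?_
    have hden : (((a:ℕ):ℝ) + ((b:ℕ):ℝ) + 2) ≠ 0 := by positivity
    have hv : (((((b:ℕ)):ℝ)+1) / (((a:ℕ):ℝ) + ((b:ℕ):ℝ) + 2))
        + (((((a:ℕ)):ℝ)+1) / (((b:ℕ):ℝ) + ((a:ℕ):ℝ) + 2)) = 1 := by
      rw [div_add_div _ _ (by linarith) (by linarith)]
      rw [div_eq_one_iff_eq (by positivity)]
      ring
    calc coef ((i:ℕ)+1) ((a:ℕ)+1) * (((((b:ℕ)):ℝ)+1) / (((a:ℕ):ℝ) + ((b:ℕ):ℝ) + 2)) * coef ((j:ℕ)+1) ((b:ℕ)+1)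
          + coef ((j:ℕ)+1) ((b:ℕ)+1) * (((((a:ℕ)):ℝ)+1) / (((b:ℕ):ℝ) + ((a:ℕ):ℝ) + 2)) * coef ((i:ℕ)+1) ((a:ℕ)+1)
        = coef ((i:ℕ)+1) ((a:ℕ)+1) * coef ((j:ℕ)+1) ((b:ℕ)+1) *
            ((((((b:ℕ)):ℝ)+1) / (((a:ℕ):ℝ) + ((b:ℕ):ℝ) + 2))
              + (((((a:ℕ)):ℝ)+1) / (((b:ℕ):ℝ) + ((a:ℕ):ℝ) + 2))) := by ring
      _ = coef ((i:ℕ)+1) ((a:ℕ)+1) * coef ((j:ℕ)+1) ((b:ℕ)+1) := by rw [hv, mul_one]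
  rw [Finset.sum_congr rfl fun b _ => e2 b]
  have : ∑ b : Fin d, ∑ a : Fin d, coef ((i:ℕ)+1) ((a:ℕ)+1) * coef ((j:ℕ)+1) ((b:ℕ)+1)
      = (∑ a : Fin d, coef ((i:ℕ)+1) ((a:ℕ)+1)) * (∑ b : Fin d, coef ((j:ℕ)+1) ((b:ℕ)+1)) := by
    rw [Finset.sum_mul_sum]
    rw [Finset.sum_comm]
  rw [this, rowsum_fin d i, rowsum_fin d j, one_mul]

lemma Hmat_congr (d : ℕ) : Hmat d * Smono d * (Hmat d)ᵀ = Saxis d := by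
  ext i j
  rcases lt_trichotomy ((i:ℕ)) ((j:ℕ)) with hlt | heq | hgt
  · have h0 := entry_lower d j i hlt
    have hs := entry_symm d i j
    have : (Hmat d * Smono d * (Hmat d)ᵀ) i j = 1 := by linarith
    rw [this, Saxis]
    have hne : i ≠ j := fun h => by subst h; omega
    have hlt' : i < j := hlt
    simp [hne, hlt']
  · have : i = j := Fin.ext heq
    subst this
    have hs := entry_symm d i i
    have : (Hmat d * Smono d * (Hmat d)ᵀ) i i = 1/2 := by linarith
    rw [this, Saxis]
    simp
  · rw [entry_lower d i j hgt, Saxis]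
    have hne : i ≠ j := fun h => by subst h; omega
    have hnlt : ¬ i < j := by
      intro h; have : (i:ℕ) < (j:ℕ) := h; omega
    simp [hne, hnlt]

lemma Hmat_isUnit (d : ℕ) : IsUnit (Hmat d) := by
  rw [Matrix.isUnit_iff_isUnit_det]
  rw [Matrix.det_of_lowerTriangular (Hmat d) (by
    intro i j hij
    exact coef_zero _ _ (by simp only [OrderDual.toDual_lt_toDual] at hij; omega))]
  rw [isUnit_iff_ne_zero]
  have hpos : ∀ i : Fin d, 0 < Hmat d i i := by
    intro i
    have : Hmat d i i = coef ((i:ℕ)+1) ((i:ℕ)+1) := rfl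
    rw [this, coef]
    simp only [Nat.sub_self, pow_zero, Nat.choose_self, Nat.cast_one, one_mul, mul_one]
    have h1 : 0 < ((i:ℕ)+1+((i:ℕ)+1)-1).choose ((i:ℕ)+1-1) := by
      apply Nat.choose_pos; omega
    exact_mod_cast h1
  exact ne_of_gt (Finset.prod_pos (fun i _ => hpos i))

/-- There is an invertible matrix `H` with `H · S_mono · Hᵀ = S_axis`; consequently the
congruence orbits `{X S_axis Xᵀ}` and `{X S_mono Xᵀ}` coincide. -/
theorem axis_mono_congruent (d : ℕ) :
    (∃ H : Matrix (Fin d) (Fin d) ℝ, IsUnit H ∧ H * Smono d * Hᵀ = Saxis d) ∧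
    {S : Matrix (Fin d) (Fin d) ℝ | ∃ X : Matrix (Fin d) (Fin d) ℝ, S = X * Saxis d * Xᵀ} =
      {S : Matrix (Fin d) (Fin d) ℝ | ∃ X : Matrix (Fin d) (Fin d) ℝ, S = X * Smono d * Xᵀ} := by
  have hU := Hmat_isUnit d
  have hC := Hmat_congr d
  have hdet : IsUnit (Hmat d).det := (Matrix.isUnit_iff_isUnit_det _).mp hU
  have hdetT : IsUnit ((Hmat d)ᵀ).det := by rwa [Matrix.det_transpose]
  have hinv : Smono d = (Hmat d)⁻¹ * Saxis d * ((Hmat d)⁻¹)ᵀ := by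
    rw [← hC, Matrix.transpose_nonsing_inv]
    symm
    calc (Hmat d)⁻¹ * (Hmat d * Smono d * (Hmat d)ᵀ) * ((Hmat d)ᵀ)⁻¹
        = ((Hmat d)⁻¹ * Hmat d) * (Smono d * ((Hmat d)ᵀ * ((Hmat d)ᵀ)⁻¹)) := by
          simp only [Matrix.mul_assoc]
      _ = Smono d := by
          rw [Matrix.nonsing_inv_mul _ hdet, Matrix.mul_nonsing_inv _ hdetT, one_mul, mul_one]
  refine ⟨⟨Hmat d, hU, hC⟩, ?_⟩
  ext S
  simp only [Set.mem_setOf_eq]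
  constructor
  · rintro ⟨X, rfl⟩
    refine ⟨X * Hmat d, ?_⟩
    rw [Matrix.transpose_mul, ← hC]
    simp only [Matrix.mul_assoc]
  · rintro ⟨X, rfl⟩
    refine ⟨X * (Hmat d)⁻¹, ?_⟩
    rw [Matrix.transpose_mul, hinv]
    simp only [Matrix.mul_assoc]
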